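/- Let γ : (−a,a) → ℝ be smooth and define the 1-form on ℂ \ {0} ≅ ℝ² (in coordinates z = z_R + i z_I, with q(z) = z q̂(|z|²) for a smooth Σ_r-valued q̂): b := −Im⟨D_{z_R} q̄(z), q(z)⟩ dz_R − Im⟨D_{z_I} q̄(z), q(z)⟩ dz_I. Then db = 2 Im⟨D_{z_R} q̄(z), D_{z_I} q(z)⟩ dz_R ∧ dz_I = i γ(|z|²) dz ∧ dz̄, where γ(|z|²) := ⟨q̂(|z|²), q̂(|z|²)⟩ + 2|z|² ⟨q̂(|z|²), q̂'(|z|²)⟩, provided q̂ takes values in real-valued functions so that ⟨·,·⟩ is the real bilinear L² pairing. -/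

import Mathlib

open Complex

lemma auxA {Hr : Type*} [NormedAddCommGroup Hr] [InnerProductSpace ℝ Hr]
    (qh : ℝ → Hr) (z : ℂ) (hd : HasDerivAt qh (deriv qh (normSq z)) (normSq z)) (ε : ℝ) :
    ∃ A : ℂ →L[ℝ] Hr × Hr,
      HasFDerivAt (fun w : ℂ => (w.re • qh (normSq w), (ε * w.im) • qh (normSq w))) A z ∧
      A 1 = (qh (normSq z) + (2*z.re*z.re) • deriv qh (normSq z),
             (ε*(2*z.re*z.im)) • deriv qh (normSq z)) ∧
      A Complex.I = ((2*z.re*z.im) • deriv qh (normSq z),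
             ε • qh (normSq z) + (ε*(2*z.im*z.im)) • deriv qh (normSq z)) := by
  have hre : HasFDerivAt (fun w : ℂ => w.re) Complex.reCLM z := Complex.reCLM.hasFDerivAt
  have him : HasFDerivAt (fun w : ℂ => w.im) Complex.imCLM z := Complex.imCLM.hasFDerivAt
  have hns : HasFDerivAt (fun w : ℂ => normSq w)
      (z.re • Complex.reCLM + z.re • Complex.reCLM
        + (z.im • Complex.imCLM + z.im • Complex.imCLM)) z := by
    have : (fun w : ℂ => normSq w) = fun w : ℂ => w.re * w.re + w.im * w.im := by
      ext w; simp [Complex.normSq_apply]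
    rw [this]; exact (hre.mul hre).add (him.mul him)
  have hF := hd.hasFDerivAt.comp z hns
  simp only [Function.comp_def] at hF
  have h1 := HasFDerivAt.prodMk (hre.smul hF) ((him.const_mul ε).smul hF)
  refine ⟨_, h1, ?_, ?_⟩ <;>
    · refine Prod.ext ?_ ?_ <;>
        · simp
          module

set_option maxHeartbeats 2000000 in
/-- Computation of `db` for the correction 1-form
`b = −Im⟨D_{z_R} q̄, q⟩ dz_R − Im⟨D_{z_I} q̄, q⟩ dz_I` with `q(z) = z q̂(|z|²)`,
`q̂` real-vector valued: `db = 2 Im⟨D_{z_R} q̄, D_{z_I} q⟩ dz_R ∧ dz_I = iγ(|z|²) dz ∧ dz̄`,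
where `γ(s) = ⟨q̂(s), q̂(s)⟩ + 2s ⟨q̂(s), q̂'(s)⟩`.  The complexification of the real
Hilbert space `Hr` is modeled as `Hr × Hr` with the bilinear pairing `P`. -/
theorem stmt17 {Hr : Type*} [NormedAddCommGroup Hr] [InnerProductSpace ℝ Hr]
    (a : ℝ) (ha : 0 < a) (qh : ℝ → Hr)
    (hqh : ContDiffOn ℝ (⊤ : ℕ∞) qh (Set.Ioo (-a) a))
    (P : Hr × Hr → Hr × Hr → ℂ)
    (hP : ∀ u v : Hr × Hr, P u v =
      (((inner ℝ u.1 v.1 : ℝ) - (inner ℝ u.2 v.2 : ℝ) : ℝ) : ℂ)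
        + (((inner ℝ u.1 v.2 : ℝ) + (inner ℝ u.2 v.1 : ℝ) : ℝ) : ℂ) * Complex.I)
    (q qc : ℂ → Hr × Hr)
    (hq : ∀ z : ℂ, q z = (z.re • qh (Complex.normSq z), z.im • qh (Complex.normSq z)))
    (hqc : ∀ z : ℂ, qc z = (z.re • qh (Complex.normSq z), (-z.im) • qh (Complex.normSq z)))
    (γ : ℝ → ℝ)
    (hγ : ∀ s : ℝ, γ s = (inner ℝ (qh s) (qh s) : ℝ) + 2 * s * (inner ℝ (qh s) (deriv qh s) : ℝ))
    (b : ℂ → ℂ → ℝ)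
    (hb : ∀ z w : ℂ, b z w =
      -(P (fderiv ℝ qc z 1) (q z)).im * w.re - (P (fderiv ℝ qc z Complex.I) (q z)).im * w.im) :
    ∀ z : ℂ, Complex.normSq z < a → ∀ X Y : ℂ,
      (fderiv ℝ (fun w => b w Y) z X - fderiv ℝ (fun w => b w X) z Y
        = 2 * (P (fderiv ℝ qc z 1) (fderiv ℝ q z Complex.I)).im
            * (X.re * Y.im - X.im * Y.re))
      ∧ (fderiv ℝ (fun w => b w Y) z X - fderiv ℝ (fun w => b w X) z Y
        = (Complex.I * ((γ (Complex.normSq z) : ℝ) : ℂ)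
            * (X * (starRingEnd ℂ) Y - Y * (starRingEnd ℂ) X)).re) := by
  intro z hz X Y
  have hopen : IsOpen {w : ℂ | normSq w < a} :=
    isOpen_lt Complex.continuous_normSq continuous_const
  have hmem : ∀ w : ℂ, normSq w < a → normSq w ∈ Set.Ioo (-a) a := fun w hw =>
    ⟨lt_of_lt_of_le (neg_neg_of_pos ha) (normSq_nonneg w), hw⟩
  have hdqh : ∀ w : ℂ, normSq w < a → HasDerivAt qh (deriv qh (normSq w)) (normSq w) :=
    fun w hw =>
      ((hqh.contDiffAt (isOpen_Ioo.mem_nhds (hmem w hw))).differentiableAt (by simp)).hasDerivAt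
  have hqfun : q = fun w : ℂ => (w.re • qh (normSq w), ((1:ℝ) * w.im) • qh (normSq w)) := by
    funext w; rw [hq w]; norm_num
  have hqcfun : qc = fun w : ℂ => (w.re • qh (normSq w), ((-1:ℝ) * w.im) • qh (normSq w)) := by
    funext w; rw [hqc w]; norm_num
  have hqcD : ∀ w : ℂ, normSq w < a →
      fderiv ℝ qc w 1 = (qh (normSq w) + (2*w.re*w.re) • deriv qh (normSq w),
          ((-1:ℝ)*(2*w.re*w.im)) • deriv qh (normSq w))
      ∧ fderiv ℝ qc w Complex.I = ((2*w.re*w.im) • deriv qh (normSq w),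
          (-1:ℝ) • qh (normSq w) + ((-1:ℝ)*(2*w.im*w.im)) • deriv qh (normSq w)) := by
    intro w hw
    obtain ⟨A, hA, h1, hI⟩ := auxA qh w (hdqh w hw) (-1)
    rw [← hqcfun] at hA
    rw [hA.fderiv]
    exact ⟨h1, hI⟩
  have hqD : fderiv ℝ q z Complex.I = ((2*z.re*z.im) • deriv qh (normSq z),
      (1:ℝ) • qh (normSq z) + ((1:ℝ)*(2*z.im*z.im)) • deriv qh (normSq z)) := by
    obtain ⟨A, hA, h1, hI⟩ := auxA qh z (hdqh z hz) 1
    rw [← hqfun] at hA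
    rw [hA.fderiv]; exact hI
  have hbform : ∀ w : ℂ, normSq w < a → ∀ v : ℂ,
      b w v = (-w.im * v.re + w.re * v.im)
        * (inner ℝ (qh (normSq w)) (qh (normSq w)) : ℝ) := by
    intro w hw v
    rw [hb, (hqcD w hw).1, (hqcD w hw).2, hq, hP, hP]
    simp [inner_add_left, real_inner_smul_left, real_inner_smul_right]
    simp only [← Complex.ofReal_pow, Complex.ofReal_re, Complex.ofReal_im]
    ring
  have hre : HasFDerivAt (fun w : ℂ => w.re) Complex.reCLM z := Complex.reCLM.hasFDerivAt
  have him : HasFDerivAt (fun w : ℂ => w.im) Complex.imCLM z := Complex.imCLM.hasFDerivAt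
  have hns : HasFDerivAt (fun w : ℂ => normSq w)
      (z.re • Complex.reCLM + z.re • Complex.reCLM
        + (z.im • Complex.imCLM + z.im • Complex.imCLM)) z := by
    have : (fun w : ℂ => normSq w) = fun w : ℂ => w.re * w.re + w.im * w.im := by
      ext w; simp [Complex.normSq_apply]
    rw [this]; exact (hre.mul hre).add (him.mul him)
  have hρ : HasDerivAt (fun s => (inner ℝ (qh s) (qh s) : ℝ))
      ((inner ℝ (qh (normSq z)) (deriv qh (normSq z)) : ℝ)
        + (inner ℝ (deriv qh (normSq z)) (qh (normSq z)) : ℝ)) (normSq z) :=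
    (hdqh z hz).inner ℝ (hdqh z hz)
  have hρns := hρ.hasFDerivAt.comp z hns
  simp only [Function.comp_def] at hρns
  have hDb : ∀ V W : ℂ, fderiv ℝ (fun w => b w V) z W
      = (-W.im * V.re + W.re * V.im) * (inner ℝ (qh (normSq z)) (qh (normSq z)) : ℝ)
        + (-z.im * V.re + z.re * V.im)
          * (((inner ℝ (qh (normSq z)) (deriv qh (normSq z)) : ℝ)
              + (inner ℝ (deriv qh (normSq z)) (qh (normSq z)) : ℝ))
            * (2*(z.re*W.re) + 2*(z.im*W.im))) := by
    intro V W
    have hev : (fun w => b w V) =ᶠ[nhds z] (fun w => (-w.im * V.re + w.re * V.im)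
        * (inner ℝ (qh (normSq w)) (qh (normSq w)) : ℝ)) :=
      Filter.eventuallyEq_of_mem (hopen.mem_nhds hz) (fun w hw => hbform w hw V)
    rw [hev.fderiv_eq]
    have hB := ((him.neg.mul_const V.re).add (hre.mul_const V.im)).mul hρns
    rw [HasFDerivAt.fderiv (f := fun w => (-w.im * V.re + w.re * V.im)
        * (inner ℝ (qh (normSq w)) (qh (normSq w)) : ℝ)) hB]
    simp
    ring
  rw [hDb Y X, hDb X Y, (hqcD z hz).1, hqD, hP]
  constructor
  · simp only [inner_add_left, inner_add_right, real_inner_smul_left, real_inner_smul_right,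
      Complex.add_im, Complex.ofReal_im, Complex.mul_im, Complex.ofReal_re, Complex.I_im,
      Complex.I_re, Complex.normSq_apply,
      real_inner_comm (deriv qh (z.re * z.re + z.im * z.im)) (qh (z.re * z.re + z.im * z.im))]
    ring
  · rw [hγ]
    simp only [Complex.mul_re, Complex.mul_im, Complex.sub_re, Complex.sub_im, Complex.I_re,
      Complex.I_im, Complex.ofReal_re, Complex.ofReal_im, Complex.conj_re, Complex.conj_im,
      Complex.normSq_apply,
      real_inner_comm (deriv qh (z.re * z.re + z.im * z.im)) (qh (z.re * z.re + z.im * z.im))]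
    ring
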